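/- arXiv:1110.4693 — 2 statements merged into one kernel-verified Lean document; each statement's English description precedes it below -/
import Mathlib

section
/- Let $p$ be a prime, $r \geq 2$, and $x_1, \ldots, x_r \in \mathbb{F}_p$ distinct elements. Let $\mathcal{M}$ be a nonempty finite subset of an algebraic closure $\overline{\mathbb{F}}_p$ with $4|\mathcal{M}| < p^{1/r}$. Then there exists $j \in \{1, \ldots, r\}$ such that the translate $\mathcal{M} + x_j$ is not contained in $\bigcup_{i \neq j} (\mathcal{M} + x_i)$. -/
open Finset

lemma gap_lemma' {p : ℕ} [NeZero p] (A : Finset (ZMod p)) (hA : A.Nonempty)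
    (L : ℕ) (hL : A.card * L < p) :
    ∃ a ∈ A, ∀ d : ℕ, 1 ≤ d → d ≤ L → a + (d : ZMod p) ∉ A := by
  by_contra h
  push_neg at h
  obtain ⟨a₀, ha₀⟩ := hA
  have hcover : (Finset.univ : Finset (ZMod p)) ⊆
      A.biUnion (fun a => (Finset.range L).image (fun d : ℕ => a + (d : ZMod p))) := by
    intro z _
    have hex : ∃ e : ℕ, z - (e : ℕ) ∈ A := by
      refine ⟨(z - a₀).val, ?_⟩
      have : (((z - a₀).val : ℕ) : ZMod p) = z - a₀ := ZMod.natCast_rightInverse _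
      rw [this]
      simpa using ha₀
    set e := Nat.find hex with he_def
    have he : z - (e : ℕ) ∈ A := Nat.find_spec hex
    have heL : e < L := by
      by_contra hge
      push_neg at hge
      obtain ⟨d, hd1, hdL, hdA⟩ := h (z - (e : ℕ)) he
      have hdle : d ≤ e := hdL.trans hge
      have hmem : z - ((e - d : ℕ) : ZMod p) ∈ A := by
        have hc : ((e - d : ℕ) : ZMod p) = (e : ZMod p) - (d : ZMod p) := by
          push_cast [Nat.cast_sub hdle]; ring
        rw [hc]
        have : z - ((e : ZMod p) - (d : ZMod p)) = z - (e : ℕ) + (d : ZMod p) := by ring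
        rw [this]
        exact hdA
      exact Nat.find_min hex (show e - d < e by omega) hmem
    refine Finset.mem_biUnion.2 ⟨z - (e : ℕ), he, Finset.mem_image.2 ⟨e, Finset.mem_range.2 heL, ?_⟩⟩
    ring
  have h1 : (Finset.univ : Finset (ZMod p)).card ≤ A.card * L := by
    calc (Finset.univ : Finset (ZMod p)).card
        ≤ (A.biUnion (fun a => (Finset.range L).image (fun d : ℕ => a + (d : ZMod p)))).card :=
          Finset.card_le_card hcover
      _ ≤ ∑ a ∈ A, ((Finset.range L).image (fun d : ℕ => a + (d : ZMod p))).card :=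
          Finset.card_biUnion_le
      _ ≤ ∑ _a ∈ A, L := Finset.sum_le_sum (fun a _ =>
          (Finset.card_image_le).trans_eq (Finset.card_range L))
      _ = A.card * L := by rw [Finset.sum_const, smul_eq_mul]
  have h2 : (Finset.univ : Finset (ZMod p)).card = p := by
    simp [ZMod.card]
  omega

theorem stmt_9 (p : ℕ) [Fact p.Prime] (r : ℕ) (hr : 2 ≤ r) (x : Fin r → ZMod p)
    (hx : Function.Injective x)
    (M : Finset (AlgebraicClosure (ZMod p))) (hM : M.Nonempty)
    (hcard : (4 * M.card : ℝ) < (p : ℝ) ^ ((1 : ℝ) / r)) :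
    ∃ j : Fin r, ∃ α ∈ M, ∀ i : Fin r, i ≠ j → ∀ β ∈ M,
      β + algebraMap (ZMod p) (AlgebraicClosure (ZMod p)) (x i) ≠
        α + algebraMap (ZMod p) (AlgebraicClosure (ZMod p)) (x j) := by
  classical
  haveI : NeZero p := ⟨(Fact.out : p.Prime).ne_zero⟩
  set ι := algebraMap (ZMod p) (AlgebraicClosure (ZMod p)) with hι
  have hιinj : Function.Injective ι := ι.injective
  obtain ⟨α₀, hα₀⟩ := hM
  set m := M.card with hm_def
  have hm : 1 ≤ m := Finset.card_pos.2 ⟨α₀, hα₀⟩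
  set K := 4 * m with hK_def
  have hK : 0 < K := by omega
  -- Step A : K ^ r < p
  have hKp : K ^ r < p := by
    have h1 : ((K : ℝ)) ^ r < ((p : ℝ) ^ ((1 : ℝ) / r)) ^ r := by
      refine pow_lt_pow_left₀ ?_ (by positivity) (by omega)
      have hc : ((K : ℕ) : ℝ) = 4 * (m : ℝ) := by rw [hK_def]; push_cast; ring
      rw [hc]
      exact hcard
    have h2 : ((p : ℝ) ^ ((1 : ℝ) / r)) ^ r = (p : ℝ) := by
      rw [← Real.rpow_natCast ((p : ℝ) ^ ((1 : ℝ) / r)) r, ← Real.rpow_mul (by positivity)]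
      rw [one_div, inv_mul_cancel₀ (by positivity : (r : ℝ) ≠ 0), Real.rpow_one]
    rw [h2] at h1
    have h3 : ((K ^ r : ℕ) : ℝ) < ((p : ℕ) : ℝ) := by push_cast; exact h1
    exact_mod_cast h3
  have hp2 : 2 ≤ p := (Fact.out : p.Prime).two_le
  -- Step B : pigeonhole for the multiplier t
  obtain ⟨D, hD1, hD2⟩ : ∃ D : ℕ, D * K ≤ p - 1 ∧ p - 1 < D * K + K :=
    ⟨(p - 1) / K, Nat.div_mul_le_self _ _, Nat.lt_div_mul_add hK⟩
  set q := D + 1 with hq_def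
  have hq : 0 < q := Nat.succ_pos D
  have hKq : p - 1 < K * q := by
    calc p - 1 < D * K + K := hD2
      _ = K * q := by rw [hq_def]; ring
  have hbox : ∀ v : ZMod p, v.val / q < K := by
    intro v
    have h1 : v.val ≤ p - 1 := by have := ZMod.val_lt v; omega
    have h2 : v.val / q ≤ (p - 1) / q := Nat.div_le_div_right h1
    have h3 : (p - 1) / q < K := (Nat.div_lt_iff_lt_mul hq).2 hKq
    omega
  have hcardlt : Fintype.card (Fin r → Fin K) < Fintype.card (ZMod p) := by
    rw [Fintype.card_fun, Fintype.card_fin, Fintype.card_fin, ZMod.card]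
    exact hKp
  obtain ⟨t₁, t₂, htne, hF⟩ := Fintype.exists_ne_map_eq_of_card_lt
    (fun t : ZMod p => fun j : Fin r => (⟨(t * x j).val / q, hbox _⟩ : Fin K)) hcardlt
  set t := t₁ - t₂ with ht_def
  have ht : t ≠ 0 := sub_ne_zero.2 htne
  set y : Fin r → ℤ := fun j => ((t₁ * x j).val : ℤ) - ((t₂ * x j).val : ℤ) with hy_def
  have hyc : ∀ j, ((y j : ℤ) : ZMod p) = t * x j := by
    intro j
    have h1 : (((t₁ * x j).val : ℕ) : ZMod p) = t₁ * x j := ZMod.natCast_rightInverse _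
    have h2 : (((t₂ * x j).val : ℕ) : ZMod p) = t₂ * x j := ZMod.natCast_rightInverse _
    push_cast [hy_def]
    rw [h1, h2, ht_def]
    ring
  have hkey : ∀ u v : ℕ, u / q = v / q → (u : ℤ) - (v : ℤ) ≤ (q : ℤ) - 1 := by
    intro u v huv
    have h1 : v / q * q ≤ v := Nat.div_mul_le_self v q
    have h2 : u < u / q * q + q := Nat.lt_div_mul_add hq
    rw [huv] at h2
    set w := v / q * q with hw
    omega
  have hybound : ∀ j, y j ≤ (q : ℤ) - 1 ∧ -((q : ℤ) - 1) ≤ y j := by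
    intro j
    have hFj := congrFun hF j
    have hdiv : (t₁ * x j).val / q = (t₂ * x j).val / q := congrArg Fin.val hFj
    have h1 := hkey _ _ hdiv
    have h2 := hkey _ _ hdiv.symm
    simp only [hy_def]
    omega
  -- Step C : pick j maximizing y
  haveI : Nonempty (Fin r) := ⟨⟨0, by omega⟩⟩
  obtain ⟨j, hj⟩ := Finite.exists_max y
  -- Step D : the set A and the gap
  set A : Finset (ZMod p) :=
    Finset.univ.filter (fun b => α₀ + ι (b * t⁻¹) ∈ M) with hA_def
  have hA0 : (0 : ZMod p) ∈ A := by
    simp only [hA_def, Finset.mem_filter, Finset.mem_univ, true_and, zero_mul, map_zero,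
      add_zero]
    exact hα₀
  have hAcard : A.card ≤ m := by
    apply Finset.card_le_card_of_injOn (fun b => α₀ + ι (b * t⁻¹))
    · intro b hb
      simp only [hA_def, Finset.mem_coe, Finset.mem_filter] at hb
      exact hb.2
    · intro b _ c _ hbc
      simp only at hbc
      have h0 : ι (b * t⁻¹) = ι (c * t⁻¹) := add_left_cancel hbc
      exact mul_right_cancel₀ (inv_ne_zero ht) (hιinj h0)
  set L := 2 * D with hL_def
  have hmL : A.card * L < p := by
    have hmLp : m * L < p := by
      calc m * L = 2 * (m * D) := by rw [hL_def]; ring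
        _ ≤ 4 * (m * D) := Nat.mul_le_mul_right _ (by norm_num)
        _ = D * K := by rw [hK_def]; ring
        _ ≤ p - 1 := hD1
        _ < p := by omega
    exact lt_of_le_of_lt (Nat.mul_le_mul_right L hAcard) hmLp
  obtain ⟨a, haA, hgap⟩ := gap_lemma' A ⟨0, hA0⟩ L hmL
  -- Step E : conclusion
  refine ⟨j, α₀ + ι (a * t⁻¹), ?_, ?_⟩
  · simp only [hA_def, Finset.mem_filter] at haA
    exact haA.2
  intro i hij β hβ heq
  set d : ℕ := (y j - y i).toNat with hd_def
  have hyij : y i < y j := by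
    rcases lt_or_eq_of_le (hj i) with h | h
    · exact h
    · exfalso
      have : t * x i = t * x j := by rw [← hyc, ← hyc, h]
      exact hij (hx (mul_left_cancel₀ ht this))
  have hd1 : 1 ≤ d := by omega
  have hdL : d ≤ L := by
    have h1 := (hybound j).1
    have h2 := (hybound i).2
    have h3 : y j - y i ≤ 2 * ((q : ℤ) - 1) := by omega
    omega
  have hdc : ((d : ℕ) : ZMod p) = ((y j - y i : ℤ) : ZMod p) := by
    rw [hd_def, ← Int.cast_natCast (R := ZMod p), Int.toNat_of_nonneg (by omega : (0:ℤ) ≤ y j - y i)]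
  have hxji : x j - x i = ((d : ℕ) : ZMod p) * t⁻¹ := by
    have h1 : t * (x j - x i) = ((d : ℕ) : ZMod p) := by
      rw [hdc, mul_sub, ← hyc j, ← hyc i]
      push_cast
      ring
    field_simp
    linear_combination h1
  have hβeq : β = α₀ + ι ((a + ((d : ℕ) : ZMod p)) * t⁻¹) := by
    have h1 : β = α₀ + ι (a * t⁻¹) + ι (x j - x i) := by
      rw [map_sub]
      linear_combination heq
    rw [h1, hxji, add_mul, map_add]
    ring
  have hmem : a + ((d : ℕ) : ZMod p) ∈ A := by
    simp only [hA_def, Finset.mem_filter, Finset.mem_univ, true_and]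
    rw [← hβeq]
    exact hβ
  exact hgap d hd1 hdL hmem
end

section
/- Let $m \geq 2$, $\ell \geq 2$, $L \geq 1$ be integers with $\gcd(\ell, m) = 1$. For vectors $\mathbf{v} = (v_1, \ldots, v_L)$, $\mathbf{v}' = (v_1', \ldots, v_L') \in \mu_\ell^L$ and integer $a$, define $S(\mathbf{v},\mathbf{v}',a) = \sum_{x=1}^{L} \sum_{t=1}^{m-1} e_m\big(t(\sum_{j=1}^x F(v_j) - \sum_{j=1}^x F(v_j') - a)\big)$, where $F(v) = \ell$ if $v = 1$ and $F(v) = 0$ otherwise. Then $\sum_{a=0}^{m-1} \sum_{\mathbf{v}, \mathbf{v}' \in \mu_\ell^L} |S(\mathbf{v}, \mathbf{v}', a)|^2 \leq 7 m^4 L \ell^{2L+2}$. -/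
open Real

noncomputable def eAdd (m : ℕ) (z : ℝ) : ℂ := Complex.exp (2 * π * Complex.I * z / m)

noncomputable def Froots (ℓ : ℕ) (v : ℂ) : ℕ := if v = 1 then ℓ else 0

lemma eAdd_add (m : ℕ) (z w : ℝ) : eAdd m (z + w) = eAdd m z * eAdd m w := by
  rw [eAdd, eAdd, eAdd, ← Complex.exp_add]
  push_cast; ring_nf

lemma eAdd_eq (m : ℕ) (z : ℝ) : eAdd m z = Complex.exp ((2 * π * z / m : ℝ) * Complex.I) := by
  rw [eAdd]; push_cast; ring_nf

lemma conj_eAdd (m : ℕ) (z : ℝ) : (starRingEnd ℂ) (eAdd m z) = eAdd m (-z) := by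
  rw [eAdd, eAdd, ← Complex.exp_conj]
  push_cast
  simp only [map_mul, map_div₀, Complex.conj_I, map_ofNat, Complex.conj_ofReal, Complex.conj_natCast]
  ring_nf

lemma eAdd_nat_mul (m : ℕ) (z : ℝ) (n : ℕ) : eAdd m (z * n) = (eAdd m z) ^ n := by
  rw [eAdd, eAdd, ← Complex.exp_nat_mul]; push_cast; ring_nf

lemma eAdd_zero (m : ℕ) : eAdd m 0 = 1 := by simp [eAdd]


lemma eAdd_int_eq_one_iff (m : ℕ) (hm : 1 ≤ m) (k : ℤ) :
    eAdd m (k : ℝ) = 1 ↔ (m : ℤ) ∣ k := by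
  rw [eAdd, Complex.exp_eq_one_iff]
  have hm0 : (m : ℂ) ≠ 0 := Nat.cast_ne_zero.mpr (by omega)
  have hpi : (2 * (π:ℂ) * Complex.I) ≠ 0 := by
    simp [Real.pi_ne_zero, Complex.I_ne_zero, Complex.ofReal_ne_zero]
  constructor
  · rintro ⟨n, hn⟩
    refine ⟨n, ?_⟩
    have : (k : ℂ) = n * m := by
      field_simp at hn
      have := hn
      -- 2 π I k = n * (2 π I) * m
      have h2 : (2 * (π:ℂ) * Complex.I) * k = (2 * (π:ℂ) * Complex.I) * (n * m) := by
        push_cast at this ⊢; linear_combination (2 * (π:ℂ) * Complex.I) * this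
      exact mul_left_cancel₀ hpi h2
    exact_mod_cast this.trans (mul_comm _ _)
  · rintro ⟨n, hn⟩
    refine ⟨n, ?_⟩
    have h2 : ((k:ℝ) : ℂ) = m * n := by push_cast [hn]; ring
    rw [h2]; field_simp
lemma orth (m : ℕ) (hm : 1 ≤ m) (k : ℤ) (hk : ¬ (m:ℤ) ∣ k) :
    ∑ a ∈ Finset.range m, eAdd m ((k : ℝ) * a) = 0 := by
  have hζ : eAdd m (k:ℝ) ≠ 1 := fun h => hk ((eAdd_int_eq_one_iff m hm k).mp h)
  have hpow : ∀ a : ℕ, eAdd m ((k:ℝ) * a) = (eAdd m (k:ℝ)) ^ a := fun a => eAdd_nat_mul m _ a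
  simp only [hpow]
  rw [geom_sum_eq hζ]
  have : (eAdd m (k:ℝ)) ^ m = 1 := by
    rw [← eAdd_nat_mul, eAdd]
    have hm0 : (m : ℂ) ≠ 0 := Nat.cast_ne_zero.mpr (by omega)
    have : (2 * (π:ℂ) * Complex.I * ((k:ℝ) * (m:ℝ) : ℝ) / m) = k * (2 * π * Complex.I) := by
      push_cast; field_simp
    rw [this, Complex.exp_int_mul_two_pi_mul_I]
  rw [this, sub_self, zero_div]


lemma eAdd_sum {ι : Type*} (m : ℕ) (s : Finset ι) (f : ι → ℝ) :
    eAdd m (∑ j ∈ s, f j) = ∏ j ∈ s, eAdd m (f j) := by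
  classical
  induction s using Finset.cons_induction with
  | empty => simp [eAdd]
  | cons a s ha ih =>
      rw [Finset.sum_cons, Finset.prod_cons, ← ih, eAdd, eAdd, eAdd, ← Complex.exp_add]
      push_cast; ring_nf

lemma toFinset_eq (ℓ : ℕ) : (Polynomial.nthRoots ℓ (1:ℂ)).toFinset
    = Polynomial.nthRootsFinset ℓ (1:ℂ) := by
  classical
  rw [Polynomial.nthRootsFinset_def]

lemma card_R (ℓ : ℕ) (hℓ : 2 ≤ ℓ) : (Polynomial.nthRoots ℓ (1:ℂ)).toFinset.card = ℓ := by
  rw [toFinset_eq]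
  exact (Complex.isPrimitiveRoot_exp ℓ (by omega)).card_nthRootsFinset

lemma rootsum (m ℓ : ℕ) (hℓ : 2 ≤ ℓ) (c : ℝ) :
    ∑ v ∈ (Polynomial.nthRoots ℓ (1:ℂ)).toFinset, eAdd m (c * (Froots ℓ v : ℝ))
      = eAdd m (c * ℓ) + (ℓ - 1 : ℂ) := by
  classical
  have h1 : (1:ℂ) ∈ (Polynomial.nthRoots ℓ (1:ℂ)).toFinset := by
    rw [toFinset_eq]; exact Polynomial.one_mem_nthRootsFinset (by omega)
  rw [← Finset.add_sum_erase _ _ h1]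
  have : ∀ v ∈ ((Polynomial.nthRoots ℓ (1:ℂ)).toFinset).erase 1,
      eAdd m (c * (Froots ℓ v : ℝ)) = 1 := by
    intro v hv
    have : v ≠ 1 := Finset.ne_of_mem_erase hv
    simp [Froots, this, eAdd_zero]
  rw [Finset.sum_congr rfl this, Finset.sum_const, Finset.card_erase_of_mem h1, card_R ℓ hℓ]
  simp [Froots]
  have : ((ℓ - 1 : ℕ) : ℂ) = (ℓ : ℂ) - 1 := by
    have : (1:ℕ) ≤ ℓ := by omega
    push_cast [this]; ring
  rw [this]

lemma prodsum (m ℓ L : ℕ) (hℓ : 2 ≤ ℓ) (c : ℝ) (s : Finset (Fin L)) :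
    ∑ v ∈ Fintype.piFinset (fun _ : Fin L => (Polynomial.nthRoots ℓ (1 : ℂ)).toFinset),
      eAdd m (c * ∑ j ∈ s, (Froots ℓ (v j) : ℝ))
    = (eAdd m (c * ℓ) + (ℓ - 1 : ℂ)) ^ s.card * (ℓ : ℂ) ^ (L - s.card) := by
  classical
  have step1 : ∀ v : Fin L → ℂ, eAdd m (c * ∑ j ∈ s, (Froots ℓ (v j) : ℝ))
      = ∏ j : Fin L, (if j ∈ s then eAdd m (c * (Froots ℓ (v j) : ℝ)) else 1) := by
    intro v
    rw [Finset.mul_sum, eAdd_sum]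
    rw [← Finset.prod_subset (Finset.subset_univ s)]
    · exact Finset.prod_congr rfl fun j hj => by rw [if_pos hj]
    · intro j _ hj; rw [if_neg hj]
  simp only [step1]
  rw [← Finset.prod_univ_sum (fun _ : Fin L => (Polynomial.nthRoots ℓ (1:ℂ)).toFinset) (fun j y => if j ∈ s then eAdd m (c * (Froots ℓ y : ℝ)) else 1)]
  have step2 : ∀ j : Fin L,
      (∑ x ∈ (Polynomial.nthRoots ℓ (1 : ℂ)).toFinset,
        (if j ∈ s then eAdd m (c * (Froots ℓ x : ℝ)) else 1))
      = if j ∈ s then (eAdd m (c * ℓ) + (ℓ - 1 : ℂ)) else (ℓ : ℂ) := by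
    intro j
    by_cases hj : j ∈ s
    · simp only [if_pos hj]; exact rootsum m ℓ hℓ c
    · simp only [if_neg hj, Finset.sum_const, card_R ℓ hℓ, nsmul_eq_mul, mul_one]
  rw [Finset.prod_congr rfl fun j _ => step2 j, Finset.prod_ite, Finset.prod_const,
    Finset.prod_const]
  congr 1
  · congr 1; simp
  · congr 1
    rw [Finset.filter_not]
    rw [Finset.card_sdiff_of_subset (Finset.filter_subset _ _)]
    simp [Finset.card_univ]

lemma parseval (m L : ℕ) (hm : 2 ≤ m) (D : Fin L → ℝ) :
    ∑ a ∈ Finset.range m, ‖∑ x : Fin L, ∑ t ∈ Finset.Icc 1 (m-1),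
        eAdd m ((t:ℝ) * (D x - a))‖^2
    = m * ∑ t ∈ Finset.Icc 1 (m-1), ‖∑ x : Fin L, eAdd m ((t:ℝ) * D x)‖^2 := by
  classical
  set c : ℕ → ℂ := fun t => ∑ x : Fin L, eAdd m ((t:ℝ) * D x) with hc
  have hS : ∀ a : ℕ, (∑ x : Fin L, ∑ t ∈ Finset.Icc 1 (m-1), eAdd m ((t:ℝ) * (D x - a)))
      = ∑ t ∈ Finset.Icc 1 (m-1), c t * eAdd m (-((t:ℝ) * a)) := by
    intro a
    rw [Finset.sum_comm]
    refine Finset.sum_congr rfl fun t _ => ?_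
    rw [hc, Finset.sum_mul]
    refine Finset.sum_congr rfl fun x _ => ?_
    rw [← eAdd_add]
    congr 1; ring
  simp only [hS]
  -- now Parseval
  have key : ∀ a : ℕ, (‖∑ t ∈ Finset.Icc 1 (m-1), c t * eAdd m (-((t:ℝ) * a))‖^2 : ℝ)
      = ((∑ t ∈ Finset.Icc 1 (m-1), c t * eAdd m (-((t:ℝ) * a))) *
         (starRingEnd ℂ) (∑ t ∈ Finset.Icc 1 (m-1), c t * eAdd m (-((t:ℝ) * a)))).re := by
    intro a
    rw [Complex.mul_conj, ← Complex.sq_norm]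
    simp [← Complex.ofReal_pow]
  simp only [key]
  rw [← Complex.re_sum]
  have expand : ∑ a ∈ Finset.range m,
      ((∑ t ∈ Finset.Icc 1 (m-1), c t * eAdd m (-((t:ℝ) * a))) *
       (starRingEnd ℂ) (∑ t ∈ Finset.Icc 1 (m-1), c t * eAdd m (-((t:ℝ) * a))))
      = ∑ t ∈ Finset.Icc 1 (m-1), (c t * (starRingEnd ℂ) (c t)) * m := by
    have h1 : ∀ a : ℕ, ((∑ t ∈ Finset.Icc 1 (m-1), c t * eAdd m (-((t:ℝ) * a))) *
        (starRingEnd ℂ) (∑ t ∈ Finset.Icc 1 (m-1), c t * eAdd m (-((t:ℝ) * a))))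
        = ∑ t ∈ Finset.Icc 1 (m-1), ∑ t' ∈ Finset.Icc 1 (m-1),
            (c t * (starRingEnd ℂ) (c t')) * eAdd m ((((t':ℤ) - t : ℤ):ℝ) * a) := by
      intro a
      rw [map_sum, Finset.sum_mul_sum]
      refine Finset.sum_congr rfl fun t _ => Finset.sum_congr rfl fun t' _ => ?_
      rw [map_mul, conj_eAdd, neg_neg]
      rw [mul_mul_mul_comm, ← eAdd_add]
      congr 2
      push_cast; ring
    simp only [h1]
    rw [Finset.sum_comm]
    refine Finset.sum_congr rfl fun t ht => ?_
    rw [Finset.sum_comm]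
    have h2 : ∀ t' ∈ Finset.Icc 1 (m-1),
        ∑ a ∈ Finset.range m, (c t * (starRingEnd ℂ) (c t')) * eAdd m ((((t':ℤ) - t : ℤ):ℝ) * a)
        = if t' = t then (c t * (starRingEnd ℂ) (c t)) * m else 0 := by
      intro t' ht'
      rw [← Finset.mul_sum]
      by_cases h : t' = t
      · subst h
        simp only [if_pos rfl]
        have : ∀ a ∈ Finset.range m, eAdd m ((((t':ℤ) - t' : ℤ):ℝ) * a) = 1 := by
          intro a _
          simp [eAdd]
        rw [Finset.sum_congr rfl this]
        simp
      · rw [if_neg h, orth m (by omega) ((t':ℤ) - t), mul_zero]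
        simp only [Finset.mem_Icc] at ht ht'
        intro hd
        have h0 : (t':ℤ) - t = 0 := by
          refine Int.eq_zero_of_dvd_of_natAbs_lt_natAbs hd ?_
          simp only [Int.natAbs_natCast]
          omega
        omega
    rw [Finset.sum_congr rfl h2, Finset.sum_ite_eq' _ t, if_pos ht]
  rw [expand]
  rw [Complex.re_sum]
  rw [Finset.mul_sum]
  refine Finset.sum_congr rfl fun t _ => ?_
  rw [Complex.mul_conj, ← Complex.sq_norm]
  simp [← Complex.ofReal_pow]
  ring

lemma qval (m ℓ L : ℕ) (hℓ : 2 ≤ ℓ) (c : ℝ) (x x' : Fin L) (h : x' ≤ x) :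
    ∑ v ∈ Fintype.piFinset (fun _ : Fin L => (Polynomial.nthRoots ℓ (1 : ℂ)).toFinset),
      eAdd m (c * ((∑ j ∈ Finset.Iic x, (Froots ℓ (v j) : ℝ)) -
                   (∑ j ∈ Finset.Iic x', (Froots ℓ (v j) : ℝ))))
    = (eAdd m (c * ℓ) + (ℓ - 1 : ℂ)) ^ (x.1 - x'.1) * (ℓ : ℂ) ^ (L - (x.1 - x'.1)) := by
  classical
  have hsub : Finset.Iic x' ⊆ Finset.Iic x := Finset.Iic_subset_Iic.mpr h
  have hdiff : ∀ v : Fin L → ℂ,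
      (∑ j ∈ Finset.Iic x, (Froots ℓ (v j) : ℝ)) - (∑ j ∈ Finset.Iic x', (Froots ℓ (v j) : ℝ))
      = ∑ j ∈ Finset.Iic x \ Finset.Iic x', (Froots ℓ (v j) : ℝ) := by
    intro v
    rw [Finset.sum_sdiff_eq_sub hsub]
  simp only [hdiff]
  rw [prodsum m ℓ L hℓ c]
  have hcard : (Finset.Iic x \ Finset.Iic x').card = x.1 - x'.1 := by
    rw [Finset.card_sdiff_of_subset hsub, Fin.card_Iic, Fin.card_Iic]
    omega
  rw [hcard]

lemma w_neg (m ℓ : ℕ) (c : ℝ) :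
    ‖eAdd m (-c * ℓ) + (ℓ - 1 : ℂ)‖ = ‖eAdd m (c * ℓ) + (ℓ - 1 : ℂ)‖ := by
  have : eAdd m (-c * ℓ) + (ℓ - 1 : ℂ) = (starRingEnd ℂ) (eAdd m (c * ℓ) + (ℓ - 1 : ℂ)) := by
    rw [map_add, conj_eAdd]
    congr 1
    · congr 1; ring
    · simp [map_sub]
  rw [this, RCLike.norm_conj]

lemma qnorm (m ℓ L : ℕ) (hℓ : 2 ≤ ℓ) (c : ℝ) (x x' : Fin L) :
    ‖∑ v ∈ Fintype.piFinset (fun _ : Fin L => (Polynomial.nthRoots ℓ (1 : ℂ)).toFinset),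
      eAdd m (c * ((∑ j ∈ Finset.Iic x, (Froots ℓ (v j) : ℝ)) -
                   (∑ j ∈ Finset.Iic x', (Froots ℓ (v j) : ℝ))))‖
    = ‖eAdd m (c * ℓ) + (ℓ - 1 : ℂ)‖ ^ ((x.1 - x'.1) + (x'.1 - x.1))
      * (ℓ : ℝ) ^ (L - ((x.1 - x'.1) + (x'.1 - x.1))) := by
  rcases le_total x' x with h | h
  · rw [qval m ℓ L hℓ c x x' h]
    have hd : (x.1 - x'.1) + (x'.1 - x.1) = x.1 - x'.1 := by
      have := h; rw [Fin.le_def] at this; omega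
    rw [hd, norm_mul, norm_pow, norm_pow]
    congr 2
    simp
  · have flip : ∀ v : Fin L → ℂ, c * ((∑ j ∈ Finset.Iic x, (Froots ℓ (v j) : ℝ)) -
        (∑ j ∈ Finset.Iic x', (Froots ℓ (v j) : ℝ)))
        = (-c) * ((∑ j ∈ Finset.Iic x', (Froots ℓ (v j) : ℝ)) -
        (∑ j ∈ Finset.Iic x, (Froots ℓ (v j) : ℝ))) := by intro v; ring
    simp only [flip]
    rw [qval m ℓ L hℓ (-c) x' x h]
    have hd : (x.1 - x'.1) + (x'.1 - x.1) = x'.1 - x.1 := by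
      have := h; rw [Fin.le_def] at this; omega
    rw [hd, norm_mul, norm_pow, norm_pow, w_neg]
    congr 2
    simp

lemma swap4 {α β γ δ M : Type*} [AddCommMonoid M] (s : Finset α) (t : Finset β)
    (u : Finset γ) (w : Finset δ) (f : α → β → γ → δ → M) :
    ∑ a ∈ s, ∑ b ∈ t, ∑ c ∈ u, ∑ d ∈ w, f a b c d
    = ∑ c ∈ u, ∑ d ∈ w, ∑ a ∈ s, ∑ b ∈ t, f a b c d := by
  have h1 : ∑ a ∈ s, ∑ b ∈ t, ∑ c ∈ u, ∑ d ∈ w, f a b c d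
      = ∑ a ∈ s, ∑ c ∈ u, ∑ b ∈ t, ∑ d ∈ w, f a b c d :=
    Finset.sum_congr rfl fun a _ => Finset.sum_comm
  have h2 : ∑ a ∈ s, ∑ c ∈ u, ∑ b ∈ t, ∑ d ∈ w, f a b c d
      = ∑ c ∈ u, ∑ a ∈ s, ∑ b ∈ t, ∑ d ∈ w, f a b c d := Finset.sum_comm
  have h3 : ∑ c ∈ u, ∑ a ∈ s, ∑ b ∈ t, ∑ d ∈ w, f a b c d
      = ∑ c ∈ u, ∑ a ∈ s, ∑ d ∈ w, ∑ b ∈ t, f a b c d :=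
    Finset.sum_congr rfl fun c _ => Finset.sum_congr rfl fun a _ => Finset.sum_comm
  have h4 : ∑ c ∈ u, ∑ a ∈ s, ∑ d ∈ w, ∑ b ∈ t, f a b c d
      = ∑ c ∈ u, ∑ d ∈ w, ∑ a ∈ s, ∑ b ∈ t, f a b c d :=
    Finset.sum_congr rfl fun c _ => Finset.sum_comm
  rw [h1, h2, h3, h4]

lemma sumvv (m ℓ L : ℕ) (c : ℝ) :
    ∑ v ∈ Fintype.piFinset (fun _ : Fin L => (Polynomial.nthRoots ℓ (1 : ℂ)).toFinset),
      ∑ v' ∈ Fintype.piFinset (fun _ : Fin L => (Polynomial.nthRoots ℓ (1 : ℂ)).toFinset),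
        ‖∑ x : Fin L, eAdd m (c * ((∑ j ∈ Finset.Iic x, (Froots ℓ (v j) : ℝ)) -
            (∑ j ∈ Finset.Iic x, (Froots ℓ (v' j) : ℝ))))‖ ^ 2
    = ∑ x : Fin L, ∑ x' : Fin L,
        ‖∑ v ∈ Fintype.piFinset (fun _ : Fin L => (Polynomial.nthRoots ℓ (1 : ℂ)).toFinset),
          eAdd m (c * ((∑ j ∈ Finset.Iic x, (Froots ℓ (v j) : ℝ)) -
                       (∑ j ∈ Finset.Iic x', (Froots ℓ (v j) : ℝ))))‖ ^ 2 := by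
  classical
  set P := Fintype.piFinset (fun _ : Fin L => (Polynomial.nthRoots ℓ (1 : ℂ)).toFinset) with hP
  set A : (Fin L → ℂ) → Fin L → ℝ := fun v x => ∑ j ∈ Finset.Iic x, (Froots ℓ (v j) : ℝ) with hA
  set T : (Fin L → ℂ) → (Fin L → ℂ) → ℂ := fun v v' => ∑ x : Fin L, eAdd m (c * (A v x - A v' x)) with hT
  set Q : Fin L → Fin L → ℂ := fun x x' => ∑ v ∈ P, eAdd m (c * (A v x - A v x')) with hQ
  have normsq : ∀ z : ℂ, ‖z‖ ^ 2 = (z * (starRingEnd ℂ) z).re := by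
    intro z
    rw [Complex.mul_conj, ← Complex.sq_norm]
    simp [← Complex.ofReal_pow]
  simp only [normsq]
  simp only [← Complex.re_sum]
  congr 1
  have expand : ∀ v v' : Fin L → ℂ, (T v v') * (starRingEnd ℂ) (T v v')
      = ∑ x : Fin L, ∑ x' : Fin L,
          eAdd m (c * (A v x - A v x')) * eAdd m (-(c * (A v' x - A v' x'))) := by
    intro v v'
    rw [hT]
    simp only [map_sum, conj_eAdd]
    rw [Finset.sum_mul_sum]
    refine Finset.sum_congr rfl fun x _ => Finset.sum_congr rfl fun x' _ => ?_
    rw [← eAdd_add, ← eAdd_add]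
    congr 1; ring
  calc ∑ v ∈ P, ∑ v' ∈ P, (T v v') * (starRingEnd ℂ) (T v v')
      = ∑ v ∈ P, ∑ v' ∈ P, ∑ x : Fin L, ∑ x' : Fin L,
          eAdd m (c * (A v x - A v x')) * eAdd m (-(c * (A v' x - A v' x'))) := by
        exact Finset.sum_congr rfl fun v _ => Finset.sum_congr rfl fun v' _ => expand v v'
    _ = ∑ x : Fin L, ∑ x' : Fin L, ∑ v ∈ P, ∑ v' ∈ P,
          eAdd m (c * (A v x - A v x')) * eAdd m (-(c * (A v' x - A v' x'))) := by
        exact swap4 P P Finset.univ Finset.univ _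
    _ = ∑ x : Fin L, ∑ x' : Fin L, (Q x x') * (starRingEnd ℂ) (Q x x') := by
        refine Finset.sum_congr rfl fun x _ => Finset.sum_congr rfl fun x' _ => ?_
        rw [← Finset.sum_mul_sum, hQ]
        congr 1
        simp only [map_sum, conj_eAdd]

lemma wsq (m : ℕ) (z b : ℝ) :
    ‖eAdd m z + (b : ℂ)‖ ^ 2 = 1 + 2 * b * Real.cos (2 * π * z / m) + b ^ 2 := by
  rw [eAdd_eq, Complex.exp_mul_I, ← Complex.ofReal_cos, ← Complex.ofReal_sin]
  have h : (Real.cos (2*π*z/m) : ℂ) + (Real.sin (2*π*z/m) : ℂ) * Complex.I + (b:ℂ)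
      = ((Real.cos (2*π*z/m) + b : ℝ) : ℂ) + (Real.sin (2*π*z/m) : ℝ) * Complex.I := by
    push_cast; ring
  rw [h, Complex.sq_norm, Complex.normSq_add_mul_I]
  nlinarith [Real.sin_sq_add_cos_sq (2*π*z/m)]

lemma sinlb (m k : ℕ) (hm : 2 ≤ m) (hk1 : 1 ≤ k) (hk2 : k ≤ m - 1) :
    (2 : ℝ) / m ≤ Real.sin (π * k / m) := by
  have hm0 : (0:ℝ) < m := by positivity
  have key : ∀ j : ℕ, 1 ≤ j → 2 * j ≤ m → (2:ℝ) / m ≤ Real.sin (π * j / m) := by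
    intro j hj1 hj2
    have h1 : (0:ℝ) ≤ π * j / m := by positivity
    have h2 : (π * j / m : ℝ) ≤ π / 2 := by
      rw [div_le_div_iff₀ hm0 (by norm_num)]
      have : (2:ℝ) * j ≤ m := by exact_mod_cast hj2
      nlinarith [Real.pi_pos]
    have h3 := Real.mul_le_sin h1 h2
    refine le_trans ?_ h3
    have hj1' : (1:ℝ) ≤ j := by exact_mod_cast hj1
    have hπ := Real.pi_pos
    have hc : 2/π * (π*j/m) = 2*j/m := by field_simp
    rw [hc]
    gcongr
    linarith
  rcases le_or_gt (2 * k) m with h | h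
  · exact key k hk1 h
  · have hsub : Real.sin (π * k / m) = Real.sin (π * (m - k : ℕ) / m) := by
      rw [← Real.sin_pi_sub]
      congr 1
      have h1 : ((m - k : ℕ) : ℝ) = (m : ℝ) - k := by
        have : k ≤ m := by omega
        push_cast [this]; ring
      rw [h1]
      field_simp
    rw [hsub]
    exact key (m - k) (by omega) (by omega)

lemma cos2b (m k : ℕ) (hm : 2 ≤ m) (hk1 : 1 ≤ k) (hk2 : k ≤ m - 1) :
    Real.cos (2 * π * k / m) ≤ 1 - 8 / m ^ 2 := by
  have hm0 : (0:ℝ) < m := by positivity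
  have hsin := sinlb m k hm hk1 hk2
  have hhalf : Real.cos (2 * π * k / m) = 1 - 2 * Real.sin (π * k / m) ^ 2 := by
    have h := Real.sin_sq_eq_half_sub (π * k / m)
    have harg : 2 * (π * (k:ℝ) / m) = 2 * π * k / m := by ring
    rw [harg] at h
    linarith
  rw [hhalf]
  have h2m : (0:ℝ) < 2 / m := by positivity
  have hp : (2/m : ℝ)^2 ≤ Real.sin (π * k / m) ^ 2 := by
    apply pow_le_pow_left₀ h2m.le hsin
  have hexp : (2/m : ℝ)^2 = 4 / m^2 := by field_simp; ring
  rw [hexp] at hp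
  have h8 : (8:ℝ)/(m:ℝ)^2 = 2*(4/(m:ℝ)^2) := by ring
  linarith

lemma cosb (m : ℕ) (hm : 2 ≤ m) (n : ℕ) (hn : ¬ m ∣ n) :
    Real.cos (2 * π * n / m) ≤ 1 - 8 / m ^ 2 := by
  have hm0 : (0:ℝ) < m := by positivity
  have hk1 : 1 ≤ n % m := by
    rcases Nat.eq_zero_or_pos (n % m) with h | h
    · exact (hn (Nat.dvd_of_mod_eq_zero h)).elim
    · omega
  have hk2 : n % m ≤ m - 1 := by have := Nat.mod_lt n (show 0 < m by omega); omega
  have hper : Real.cos (2 * π * n / m) = Real.cos (2 * π * (n % m : ℕ) / m) := by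
    have hdecomp : (n : ℝ) = m * ((n / m : ℕ) : ℝ) + (n % m : ℕ) := by
      exact_mod_cast congrArg (Nat.cast : ℕ → ℝ) (Nat.div_add_mod n m).symm
    have harg : (2 * π * n / m : ℝ) = 2 * π * (n % m : ℕ) / m + (n / m : ℕ) * (2 * π) := by
      rw [hdecomp]; field_simp; ring
    rw [harg]
    exact Real.cos_add_nat_mul_two_pi _ _
  rw [hper]
  exact cos2b m (n % m) hm hk1 hk2


lemma geo_single (n : ℕ) (r ε : ℝ) (h0 : 0 ≤ r) (hε : 0 < ε) (h1 : r ≤ 1 - ε) :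
    ∑ d ∈ Finset.range n, r ^ d ≤ 1 / ε := by
  have hS0 : (0:ℝ) ≤ ∑ d ∈ Finset.range n, r ^ d := Finset.sum_nonneg fun d _ => pow_nonneg h0 d
  have hgm := geom_sum_mul r n
  have hrn : (0:ℝ) ≤ r ^ n := pow_nonneg h0 n
  have key : (∑ d ∈ Finset.range n, r ^ d) * ε ≤ 1 := by
    have h2 : (∑ d ∈ Finset.range n, r ^ d) * ε ≤ (∑ d ∈ Finset.range n, r ^ d) * (1 - r) := by
      apply mul_le_mul_of_nonneg_left (by linarith) hS0
    nlinarith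
  rw [le_div_iff₀ hε]
  exact key

lemma geo_row (L : ℕ) (r ε : ℝ) (h0 : 0 ≤ r) (hε : 0 < ε) (h1 : r ≤ 1 - ε) (x : Fin L) :
    ∑ x' : Fin L, r ^ ((x.1 - x'.1) + (x'.1 - x.1)) ≤ 2 / ε := by
  classical
  rw [← Finset.sum_filter_add_sum_filter_not Finset.univ (fun x' : Fin L => x'.1 ≤ x.1)]
  have bound : ∀ (s : Finset (Fin L)) (g : Fin L → ℕ), Set.InjOn g s →
      (∀ x' ∈ s, g x' < L) → ∑ x' ∈ s, r ^ (g x') ≤ 1 / ε := by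
    intro s g hinj hlt
    rw [← Finset.sum_image (fun a ha b hb h => hinj ha hb h)]
    refine le_trans (Finset.sum_le_sum_of_subset_of_nonneg ?_ ?_) (geo_single L r ε h0 hε h1)
    · intro d hd
      simp only [Finset.mem_image] at hd
      obtain ⟨x', hx', rfl⟩ := hd
      exact Finset.mem_range.mpr (hlt x' hx')
    · intro d _ _; exact pow_nonneg h0 d
  have p1 : ∑ x' ∈ Finset.univ.filter (fun x' : Fin L => x'.1 ≤ x.1),
      r ^ ((x.1 - x'.1) + (x'.1 - x.1)) ≤ 1 / ε := by
    have hcongr : ∀ x' ∈ Finset.univ.filter (fun x' : Fin L => x'.1 ≤ x.1),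
        r ^ ((x.1 - x'.1) + (x'.1 - x.1)) = r ^ (x.1 - x'.1) := by
      intro x' hx'
      simp only [Finset.mem_filter] at hx'
      congr 1
      omega
    rw [Finset.sum_congr rfl hcongr]
    refine bound _ (fun x' => x.1 - x'.1) ?_ ?_
    · intro a ha b hb hab
      simp only [Finset.coe_filter, Set.mem_setOf_eq] at ha hb
      dsimp only at hab
      exact Fin.ext (by omega)
    · intro x' _
      exact lt_of_le_of_lt (Nat.sub_le _ _) x.2
  have p2 : ∑ x' ∈ Finset.univ.filter (fun x' : Fin L => ¬ x'.1 ≤ x.1),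
      r ^ ((x.1 - x'.1) + (x'.1 - x.1)) ≤ 1 / ε := by
    have hcongr : ∀ x' ∈ Finset.univ.filter (fun x' : Fin L => ¬ x'.1 ≤ x.1),
        r ^ ((x.1 - x'.1) + (x'.1 - x.1)) = r ^ (x'.1 - x.1) := by
      intro x' hx'
      simp only [Finset.mem_filter] at hx'
      congr 1
      omega
    rw [Finset.sum_congr rfl hcongr]
    refine bound _ (fun x' => x'.1 - x.1) ?_ ?_
    · intro a ha b hb hab
      simp only [Finset.coe_filter, Set.mem_setOf_eq] at ha hb
      dsimp only at hab
      exact Fin.ext (by omega)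
    · intro x' _
      exact lt_of_le_of_lt (Nat.sub_le _ _) x'.2
  have : (2:ℝ)/ε = 1/ε + 1/ε := by ring
  rw [this]
  exact add_le_add p1 p2


lemma wbound (lr mr c : ℝ) (hl : 2 ≤ lr) (hm : 2 ≤ mr) (hc : c ≤ 1 - 8/mr^2) :
    1 + 2*(lr-1)*c + (lr-1)^2 ≤ lr^2 * (1 - 8/(lr*mr^2)) := by
  have hm2 : (0:ℝ) < mr^2 := by nlinarith
  have hl0 : (0:ℝ) < lr := by linarith
  have e1 : lr^2*(1-8/(lr*mr^2)) = lr^2 - 8*lr/mr^2 := by field_simp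
  rw [e1]
  have h2 : 2*(lr-1)*c ≤ 2*(lr-1)*(1-8/mr^2) :=
    mul_le_mul_of_nonneg_left hc (by linarith)
  have h3 : 2*(lr-1)*(1-8/mr^2) = 2*lr-2 - (16*lr-16)/mr^2 := by field_simp; ring
  have h4 : 8*lr/mr^2 ≤ (16*lr-16)/mr^2 := by
    gcongr
    linarith
  have e2 : 1 + (lr-1)^2 + (2*lr - 2) = lr^2 := by ring
  linarith

lemma powbound (W lr r : ℝ) (hW : 0 ≤ W) (hl : 0 ≤ lr) (hr0 : 0 ≤ r)
    (h2 : W^2 ≤ lr^2 * r) (d L : ℕ) (hd : d ≤ L) :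
    (W^d * lr^(L-d))^2 ≤ (lr^2)^L * r^d := by
  have e1 : (W^d * lr^(L-d))^2 = (W^2)^d * (lr^2)^(L-d) := by
    rw [mul_pow, ← pow_mul, ← pow_mul, mul_comm d 2, mul_comm (L-d) 2, pow_mul, pow_mul]
  rw [e1]
  calc (W^2)^d * (lr^2)^(L-d) ≤ (lr^2*r)^d * (lr^2)^(L-d) := by
        apply mul_le_mul_of_nonneg_right (pow_le_pow_left₀ (sq_nonneg W) h2 d) (by positivity)
    _ = (lr^2)^L * r^d := by
        rw [mul_pow]
        have : (lr^2)^d * (lr^2)^(L-d) = (lr^2)^L := by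
          rw [← pow_add]; congr 1; omega
        rw [mul_right_comm, this]

lemma corearith (mr lr : ℝ) (hm : 2 ≤ mr) (hl : 2 ≤ lr) (m1 : ℝ) (hm1 : 0 ≤ m1) (hm1' : m1 ≤ mr) :
    mr * m1 * (lr * mr^2 / 4) ≤ 7 * mr^4 * lr^2 := by
  have hmr0 : (0:ℝ) < mr := by linarith
  have hlr0 : (0:ℝ) < lr := by linarith
  have hq : (0:ℝ) ≤ lr * mr^2 / 4 := by positivity
  have h1 : mr * m1 ≤ mr^2 := by nlinarith
  calc mr * m1 * (lr * mr^2 / 4) ≤ mr^2 * (lr * mr^2 / 4) := mul_le_mul_of_nonneg_right h1 hq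
    _ = lr * mr^4 / 4 := by ring
    _ ≤ 7 * mr^4 * lr^2 := by
        have h4 : (0:ℝ) < mr^4 := pow_pos hmr0 4
        nlinarith [mul_pos h4 hlr0, mul_pos (mul_pos h4 hlr0) hlr0]
theorem stmt_12 (m ℓ L : ℕ) (hm : 2 ≤ m) (hℓ : 2 ≤ ℓ) (hL : 1 ≤ L)
    (hgcd : Nat.gcd ℓ m = 1) :
    ∑ a ∈ Finset.range m,
      ∑ v ∈ Fintype.piFinset (fun _ : Fin L => (Polynomial.nthRoots ℓ (1 : ℂ)).toFinset),
        ∑ v' ∈ Fintype.piFinset (fun _ : Fin L => (Polynomial.nthRoots ℓ (1 : ℂ)).toFinset),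
          ‖∑ x : Fin L, ∑ t ∈ Finset.Icc 1 (m - 1),
              eAdd m ((t : ℝ) * ((∑ j ∈ Finset.Iic x, (Froots ℓ (v j) : ℝ)) -
                (∑ j ∈ Finset.Iic x, (Froots ℓ (v' j) : ℝ)) - a))‖ ^ 2 ≤
      7 * (m : ℝ) ^ 4 * L * (ℓ : ℝ) ^ (2 * L + 2) := by
  classical
  have hmr : (2:ℝ) ≤ (m:ℝ) := by exact_mod_cast hm
  have hlr : (2:ℝ) ≤ (ℓ:ℝ) := by exact_mod_cast hℓ
  have hm0 : (0:ℝ) < m := by linarith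
  have hl0 : (0:ℝ) < ℓ := by linarith
  have hlm8 : (8:ℝ) ≤ (ℓ:ℝ) * (m:ℝ)^2 := by nlinarith
  set ε : ℝ := 8 / ((ℓ:ℝ) * (m:ℝ)^2) with hεdef
  have hε0 : 0 < ε := by rw [hεdef]; positivity
  set r : ℝ := 1 - ε with hrdef
  have hr0 : 0 ≤ r := by
    rw [hrdef, hεdef, sub_nonneg, div_le_one (by nlinarith)]
    exact hlm8
  have hr1 : r ≤ 1 - ε := le_of_eq hrdef
  set P := Fintype.piFinset (fun _ : Fin L => (Polynomial.nthRoots ℓ (1 : ℂ)).toFinset) with hP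
  -- Step A: swap the a-sum inside
  rw [Finset.sum_comm]
  have stepA : ∀ v : Fin L → ℂ,
      (∑ a ∈ Finset.range m, ∑ v' ∈ P,
        ‖∑ x : Fin L, ∑ t ∈ Finset.Icc 1 (m - 1),
          eAdd m ((t : ℝ) * ((∑ j ∈ Finset.Iic x, (Froots ℓ (v j) : ℝ)) -
            (∑ j ∈ Finset.Iic x, (Froots ℓ (v' j) : ℝ)) - a))‖ ^ 2)
      = ∑ v' ∈ P, ∑ a ∈ Finset.range m,
        ‖∑ x : Fin L, ∑ t ∈ Finset.Icc 1 (m - 1),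
          eAdd m ((t : ℝ) * ((∑ j ∈ Finset.Iic x, (Froots ℓ (v j) : ℝ)) -
            (∑ j ∈ Finset.Iic x, (Froots ℓ (v' j) : ℝ)) - a))‖ ^ 2 :=
    fun v => Finset.sum_comm
  rw [Finset.sum_congr rfl fun v _ => stepA v]
  -- Step B: Parseval per (v, v')
  have stepB : ∀ v v' : Fin L → ℂ,
      (∑ a ∈ Finset.range m,
        ‖∑ x : Fin L, ∑ t ∈ Finset.Icc 1 (m - 1),
          eAdd m ((t : ℝ) * ((∑ j ∈ Finset.Iic x, (Froots ℓ (v j) : ℝ)) -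
            (∑ j ∈ Finset.Iic x, (Froots ℓ (v' j) : ℝ)) - a))‖ ^ 2)
      = (m:ℝ) * ∑ t ∈ Finset.Icc 1 (m - 1),
          ‖∑ x : Fin L, eAdd m ((t:ℝ) * ((∑ j ∈ Finset.Iic x, (Froots ℓ (v j) : ℝ)) -
            (∑ j ∈ Finset.Iic x, (Froots ℓ (v' j) : ℝ))))‖ ^ 2 := by
    intro v v'
    exact parseval m L hm (fun x => (∑ j ∈ Finset.Iic x, (Froots ℓ (v j) : ℝ)) -
      (∑ j ∈ Finset.Iic x, (Froots ℓ (v' j) : ℝ)))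
  rw [Finset.sum_congr rfl fun v _ => Finset.sum_congr rfl fun v' _ => stepB v v']
  simp only [← Finset.mul_sum]
  -- swap the t-sum to the outside
  have swapT1 : ∀ v : Fin L → ℂ,
      (∑ v' ∈ P, ∑ t ∈ Finset.Icc 1 (m - 1),
        ‖∑ x : Fin L, eAdd m ((t:ℝ) * ((∑ j ∈ Finset.Iic x, (Froots ℓ (v j) : ℝ)) -
          (∑ j ∈ Finset.Iic x, (Froots ℓ (v' j) : ℝ))))‖ ^ 2)
      = ∑ t ∈ Finset.Icc 1 (m - 1), ∑ v' ∈ P,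
        ‖∑ x : Fin L, eAdd m ((t:ℝ) * ((∑ j ∈ Finset.Iic x, (Froots ℓ (v j) : ℝ)) -
          (∑ j ∈ Finset.Iic x, (Froots ℓ (v' j) : ℝ))))‖ ^ 2 :=
    fun v => Finset.sum_comm
  rw [Finset.sum_congr rfl fun v _ => swapT1 v, Finset.sum_comm]
  -- per-t rewrite via sumvv and qnorm
  have stepC : ∀ t : ℕ,
      (∑ v ∈ P, ∑ v' ∈ P,
        ‖∑ x : Fin L, eAdd m ((t:ℝ) * ((∑ j ∈ Finset.Iic x, (Froots ℓ (v j) : ℝ)) -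
          (∑ j ∈ Finset.Iic x, (Froots ℓ (v' j) : ℝ))))‖ ^ 2)
      = ∑ x : Fin L, ∑ x' : Fin L,
          ‖∑ v ∈ P, eAdd m ((t:ℝ) * ((∑ j ∈ Finset.Iic x, (Froots ℓ (v j) : ℝ)) -
            (∑ j ∈ Finset.Iic x', (Froots ℓ (v j) : ℝ))))‖ ^ 2 :=
    fun t => sumvv m ℓ L (t:ℝ)
  rw [Finset.sum_congr rfl fun t _ => stepC t]
  -- bound on W
  have hdvd : ∀ t : ℕ, 1 ≤ t → t ≤ m - 1 → ¬ m ∣ t * ℓ := by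
    intro t h1 h2 hd
    have hco : Nat.Coprime m ℓ := Nat.Coprime.symm hgcd
    have hmt : m ∣ t := hco.dvd_of_dvd_mul_right hd
    have := Nat.le_of_dvd (by omega) hmt
    omega
  have hW2 : ∀ t : ℕ, 1 ≤ t → t ≤ m - 1 →
      ‖eAdd m ((t:ℝ) * (ℓ:ℝ)) + ((ℓ:ℂ) - 1)‖^2 ≤ (ℓ:ℝ)^2 * r := by
    intro t h1 h2
    have hcos : Real.cos (2*π*((t:ℝ)*(ℓ:ℝ))/m) ≤ 1 - 8/(m:ℝ)^2 := by
      have h := cosb m hm (t*ℓ) (hdvd t h1 h2)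
      push_cast at h
      exact h
    have hws := wsq m ((t:ℝ)*(ℓ:ℝ)) ((ℓ:ℝ)-1)
    have hcast : (((ℓ:ℝ)-1 : ℝ) : ℂ) = (ℓ:ℂ) - 1 := by push_cast; ring
    rw [hcast] at hws
    rw [hws, hrdef, hεdef]
    exact wbound (ℓ:ℝ) (m:ℝ) _ hlr hmr hcos
  -- bound each t-term
  have stepD : ∀ t ∈ Finset.Icc 1 (m-1),
      (∑ x : Fin L, ∑ x' : Fin L,
        ‖∑ v ∈ P, eAdd m ((t:ℝ) * ((∑ j ∈ Finset.Iic x, (Froots ℓ (v j) : ℝ)) -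
          (∑ j ∈ Finset.Iic x', (Froots ℓ (v j) : ℝ))))‖ ^ 2)
      ≤ ((ℓ:ℝ)^2)^L * (L * (2/ε)) := by
    intro t ht
    rw [Finset.mem_Icc] at ht
    have hterm : ∀ x x' : Fin L,
        ‖∑ v ∈ P, eAdd m ((t:ℝ) * ((∑ j ∈ Finset.Iic x, (Froots ℓ (v j) : ℝ)) -
          (∑ j ∈ Finset.Iic x', (Froots ℓ (v j) : ℝ))))‖ ^ 2
        ≤ ((ℓ:ℝ)^2)^L * r ^ ((x.1 - x'.1) + (x'.1 - x.1)) := by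
      intro x x'
      rw [hP, qnorm m ℓ L hℓ (t:ℝ) x x']
      have hd : (x.1 - x'.1) + (x'.1 - x.1) ≤ L := by
        have := x.2; have := x'.2; omega
      exact powbound _ _ _ (norm_nonneg _) hl0.le hr0 (hW2 t ht.1 ht.2)
        ((x.1 - x'.1) + (x'.1 - x.1)) L hd
    calc (∑ x : Fin L, ∑ x' : Fin L,
        ‖∑ v ∈ P, eAdd m ((t:ℝ) * ((∑ j ∈ Finset.Iic x, (Froots ℓ (v j) : ℝ)) -
          (∑ j ∈ Finset.Iic x', (Froots ℓ (v j) : ℝ))))‖ ^ 2)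
        ≤ ∑ x : Fin L, ∑ x' : Fin L, ((ℓ:ℝ)^2)^L * r ^ ((x.1 - x'.1) + (x'.1 - x.1)) :=
          Finset.sum_le_sum fun x _ => Finset.sum_le_sum fun x' _ => hterm x x'
      _ = ((ℓ:ℝ)^2)^L * ∑ x : Fin L, ∑ x' : Fin L, r ^ ((x.1 - x'.1) + (x'.1 - x.1)) := by
          rw [Finset.mul_sum]
          exact Finset.sum_congr rfl fun x _ => (Finset.mul_sum _ _ _).symm
      _ ≤ ((ℓ:ℝ)^2)^L * (L * (2/ε)) := by
          apply mul_le_mul_of_nonneg_left ?_ (by positivity)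
          calc ∑ x : Fin L, ∑ x' : Fin L, r ^ ((x.1 - x'.1) + (x'.1 - x.1))
              ≤ ∑ _x : Fin L, (2/ε) :=
                Finset.sum_le_sum fun x _ => geo_row L r ε hr0 hε0 hr1 x
            _ = L * (2/ε) := by
                rw [Finset.sum_const, Finset.card_univ, Fintype.card_fin, nsmul_eq_mul]
  -- assemble
  have hB0 : (0:ℝ) ≤ ((ℓ:ℝ)^2)^L * (L * (2/ε)) := by positivity
  calc (m:ℝ) * ∑ t ∈ Finset.Icc 1 (m-1), ∑ x : Fin L, ∑ x' : Fin L,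
        ‖∑ v ∈ P, eAdd m ((t:ℝ) * ((∑ j ∈ Finset.Iic x, (Froots ℓ (v j) : ℝ)) -
          (∑ j ∈ Finset.Iic x', (Froots ℓ (v j) : ℝ))))‖ ^ 2
      ≤ (m:ℝ) * ∑ t ∈ Finset.Icc 1 (m-1), ((ℓ:ℝ)^2)^L * (L * (2/ε)) := by
        apply mul_le_mul_of_nonneg_left (Finset.sum_le_sum stepD) hm0.le
    _ = (m:ℝ) * (((m-1:ℕ):ℝ) * (((ℓ:ℝ)^2)^L * (L * (2/ε)))) := by
        rw [Finset.sum_const, Nat.card_Icc, nsmul_eq_mul]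
        norm_num
    _ ≤ 7 * (m:ℝ)^4 * L * (ℓ:ℝ)^(2*L+2) := by
        have h2ε : 2/ε = (ℓ:ℝ)*(m:ℝ)^2/4 := by
          rw [hεdef, div_div_eq_mul_div]
          ring
        have hm1 : ((m-1:ℕ):ℝ) ≤ (m:ℝ) := by
          have : (m-1:ℕ) ≤ m := by omega
          exact_mod_cast this
        have hm1' : (0:ℝ) ≤ ((m-1:ℕ):ℝ) := Nat.cast_nonneg _
        have core := corearith (m:ℝ) (ℓ:ℝ) hmr hlr ((m-1:ℕ):ℝ) hm1' hm1
        have e1 : ((ℓ:ℝ)^2)^L = (ℓ:ℝ)^(2*L) := by rw [← pow_mul]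
        have e2 : (ℓ:ℝ)^(2*L+2) = (ℓ:ℝ)^(2*L) * (ℓ:ℝ)^2 := by rw [pow_add]
        rw [h2ε, e1, e2]
        calc (m:ℝ) * (((m-1:ℕ):ℝ) * ((ℓ:ℝ)^(2*L) * (L * ((ℓ:ℝ)*(m:ℝ)^2/4))))
            = ((ℓ:ℝ)^(2*L) * L) * ((m:ℝ) * ((m-1:ℕ):ℝ) * ((ℓ:ℝ)*(m:ℝ)^2/4)) := by ring
          _ ≤ ((ℓ:ℝ)^(2*L) * L) * (7 * (m:ℝ)^4 * (ℓ:ℝ)^2) := by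
              apply mul_le_mul_of_nonneg_left core (by positivity)
          _ = 7 * (m:ℝ)^4 * L * ((ℓ:ℝ)^(2*L) * (ℓ:ℝ)^2) := by ring
end
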